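/- Let V be a 4-dimensional real vector space, g a nondegenerate symmetric bilinear form on V with inverse components g̃^{ab} (the inverse of the Gram matrix of g in a fixed basis), and Λ ∈ ℝ. Let R : V×V×V×V → ℝ be multilinear with the symmetries R(u,v,w,z) = −R(v,u,w,z) = −R(u,v,z,w) = R(w,z,u,v), and suppose its Ricci contraction Ric_{ac} := g̃^{bd} R_{abcd} equals Λ g_{ac}. For a symmetric bilinear form γ on V define the curvature contraction (ργ)_{ab} := g̃^{ce} g̃^{df} R_{eabf} γ_{cd}. Then ργ is again a symmetric bilinear form and ρ commutes with trace reversal: the trace reversal of ργ equals ρ applied to the trace reversal of γ, i.e. (ργ) − (1/2)(tr_g ργ)·g = ρ(γ − (1/2)(tr_g γ)·g). -/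

import Mathlib

open Finset

private lemma swap4 (F : Fin 4 → Fin 4 → Fin 4 → Fin 4 → ℝ) :
    (∑ c, ∑ e, ∑ d, ∑ f, F c e d f) = ∑ c, ∑ e, ∑ d, ∑ f, F d f c e := by
  have h : (∑ p : Fin 4 × Fin 4, ∑ q : Fin 4 × Fin 4, F p.1 p.2 q.1 q.2)
      = ∑ q : Fin 4 × Fin 4, ∑ p : Fin 4 × Fin 4, F p.1 p.2 q.1 q.2 := Finset.sum_comm
  simpa [Fintype.sum_prod_type] using h

private lemma swap24 (F : Fin 4 → Fin 4 → Fin 4 → Fin 4 → Fin 4 → Fin 4 → ℝ) :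
    (∑ a, ∑ c, ∑ c', ∑ e, ∑ d, ∑ f, F a c c' e d f)
      = ∑ c', ∑ e, ∑ d, ∑ f, ∑ a, ∑ c, F a c c' e d f := by
  have h : (∑ p : Fin 4 × Fin 4, ∑ q : Fin 4 × Fin 4 × Fin 4 × Fin 4,
        F p.1 p.2 q.1 q.2.1 q.2.2.1 q.2.2.2)
      = ∑ q : Fin 4 × Fin 4 × Fin 4 × Fin 4, ∑ p : Fin 4 × Fin 4,
        F p.1 p.2 q.1 q.2.1 q.2.2.1 q.2.2.2 := Finset.sum_comm
  simpa [Fintype.sum_prod_type] using h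

set_option maxHeartbeats 1000000 in
theorem stmt_1
    {V : Type} [AddCommGroup V] [Module ℝ V] [FiniteDimensional ℝ V]
    (hdim : Module.finrank ℝ V = 4)
    (B : Module.Basis (Fin 4) ℝ V)
    (g : V →ₗ[ℝ] V →ₗ[ℝ] ℝ)
    (hg_symm : ∀ u v : V, g u v = g v u)
    (hg_nondeg : ∀ v : V, (∀ u : V, g u v = 0) → v = 0)
    -- g̃ : the inverse of the Gram matrix of g in the basis B
    (gi : Matrix (Fin 4) (Fin 4) ℝ)
    (hgi : gi = (Matrix.of fun a b => g (B a) (B b))⁻¹)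
    (Λ : ℝ)
    -- R : V×V×V×V → ℝ multilinear, with the symmetries of a curvature tensor
    (R : V →ₗ[ℝ] V →ₗ[ℝ] V →ₗ[ℝ] V →ₗ[ℝ] ℝ)
    (hR1 : ∀ u v w z : V, R u v w z = - R v u w z)
    (hR2 : ∀ u v w z : V, R u v w z = - R u v z w)
    (hR3 : ∀ u v w z : V, R u v w z = R w z u v)
    -- Ricci contraction Ric_{ac} = g̃^{bd} R_{abcd} equals Λ g_{ac}
    (hRic : ∀ a c : Fin 4,
      (∑ b, ∑ d, gi b d * R (B a) (B b) (B c) (B d)) = Λ * g (B a) (B c))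
    (γ : V →ₗ[ℝ] V →ₗ[ℝ] ℝ)
    (hγ_symm : ∀ u v : V, γ u v = γ v u)
    -- the curvature contraction ρ, characterized in components:
    (ρ : (V →ₗ[ℝ] V →ₗ[ℝ] ℝ) → (V →ₗ[ℝ] V →ₗ[ℝ] ℝ))
    (hρ : ∀ (δ : V →ₗ[ℝ] V →ₗ[ℝ] ℝ) (a b : Fin 4),
      ρ δ (B a) (B b)
        = ∑ c, ∑ e, ∑ d, ∑ f, gi c e * gi d f * R (B e) (B a) (B b) (B f) * δ (B c) (B d))
    -- T represents γ, T' represents ργ (unique since g is nondegenerate)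
    (T T' : V →ₗ[ℝ] V)
    (hT : ∀ u v : V, γ u v = g u (T v))
    (hT' : ∀ u v : V, ρ γ u v = g u (T' v)) :
    -- ργ is again a symmetric bilinear form …
    (∀ u v : V, ρ γ u v = ρ γ v u) ∧
    -- … and ρ commutes with trace reversal
    ρ γ - ((1/2) * LinearMap.trace ℝ V T') • g
      = ρ (γ - ((1/2) * LinearMap.trace ℝ V T) • g) := by
  -- the Gram matrix
  set Gm : Matrix (Fin 4) (Fin 4) ℝ := Matrix.of (fun a b => g (B a) (B b)) with hGm
  -- it is invertible
  have hdet : IsUnit Gm.det := by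
    rw [isUnit_iff_ne_zero]
    intro h0
    obtain ⟨v, hv, hGv⟩ := Matrix.exists_mulVec_eq_zero_iff.2 h0
    have hw : ∀ a, g (B a) (∑ b, v b • B b) = 0 := by
      intro a
      have h1 := congrFun hGv a
      simp only [Matrix.mulVec, dotProduct, hGm, Matrix.of_apply, Pi.zero_apply] at h1
      simpa [map_sum, map_smul, smul_eq_mul, mul_comm] using h1
    have hw0 : (∑ b, v b • B b) = 0 := by
      apply hg_nondeg
      intro u
      conv_lhs => rw [← B.sum_repr u]
      have hgu : g (∑ i, B.repr u i • B i) = ∑ i, B.repr u i • g (B i) := by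
        simp only [map_sum, map_smul]
      rw [hgu, LinearMap.sum_apply]
      simp only [LinearMap.smul_apply, smul_eq_mul, hw, mul_zero, Finset.sum_const_zero]
    apply hv
    have h2 := B.repr_sum_self v
    rw [hw0] at h2
    simpa using h2.symm
  have hinv1 : gi * Gm = 1 := by rw [hgi]; exact Matrix.nonsing_inv_mul Gm hdet
  have hinv2 : Gm * gi = 1 := by rw [hgi]; exact Matrix.mul_nonsing_inv Gm hdet
  have hL : ∀ a b, (∑ c, gi a c * g (B c) (B b)) = if a = b then 1 else 0 := by
    intro a b
    have h1 := congrFun (congrFun hinv1 a) b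
    simpa [Matrix.mul_apply, Matrix.one_apply, hGm] using h1
  have hRmul : ∀ a b, (∑ c, g (B a) (B c) * gi c b) = if a = b then 1 else 0 := by
    intro a b
    have h1 := congrFun (congrFun hinv2 a) b
    simpa [Matrix.mul_apply, Matrix.one_apply, hGm] using h1
  -- gi is symmetric
  have hgis : ∀ a b, gi a b = gi b a := by
    have hGs : Matrix.transpose Gm = Gm := by
      ext i j; simp [Matrix.transpose_apply, hGm, hg_symm]
    have h1 : Matrix.transpose gi = gi := by
      rw [hgi, Matrix.transpose_nonsing_inv, hGs]
    intro a b
    have h2 := congrFun (congrFun h1 b) a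
    rw [Matrix.transpose_apply] at h2
    exact h2
  -- contraction of ρ with g itself
  have hrg : ∀ a b : Fin 4,
      (∑ c, ∑ e, ∑ d, ∑ f, gi c e * gi d f * R (B e) (B a) (B b) (B f) * g (B c) (B d))
        = ∑ e, ∑ f, gi e f * R (B e) (B a) (B b) (B f) := by
    intro a b
    calc (∑ c, ∑ e, ∑ d, ∑ f, gi c e * gi d f * R (B e) (B a) (B b) (B f) * g (B c) (B d))
        = ∑ c, ∑ e, ∑ d, (gi c e * g (B c) (B d)) *
            ∑ f, gi d f * R (B e) (B a) (B b) (B f) := by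
          refine sum_congr rfl fun c _ => sum_congr rfl fun e _ => sum_congr rfl fun d _ => ?_
          rw [Finset.mul_sum]
          exact sum_congr rfl fun f _ => by ring
      _ = ∑ e, ∑ c, ∑ d, (gi c e * g (B c) (B d)) *
            ∑ f, gi d f * R (B e) (B a) (B b) (B f) := Finset.sum_comm
      _ = ∑ e, ∑ d, ∑ c, (gi c e * g (B c) (B d)) *
            ∑ f, gi d f * R (B e) (B a) (B b) (B f) := by
          exact sum_congr rfl fun e _ => Finset.sum_comm
      _ = ∑ e, ∑ d, (∑ c, gi c e * g (B c) (B d)) *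
            ∑ f, gi d f * R (B e) (B a) (B b) (B f) := by
          refine sum_congr rfl fun e _ => sum_congr rfl fun d _ => ?_
          rw [Finset.sum_mul]
      _ = ∑ e, ∑ d, (if e = d then (1:ℝ) else 0) *
            ∑ f, gi d f * R (B e) (B a) (B b) (B f) := by
          refine sum_congr rfl fun e _ => sum_congr rfl fun d _ => ?_
          congr 1
          calc (∑ c, gi c e * g (B c) (B d)) = ∑ c, gi e c * g (B c) (B d) := by
                exact sum_congr rfl fun c _ => by rw [hgis c e]
            _ = if e = d then 1 else 0 := hL e d
      _ = ∑ e, ∑ f, gi e f * R (B e) (B a) (B b) (B f) := by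
          refine sum_congr rfl fun e _ => ?_
          simp [ite_mul]
  have hrg2 : ∀ a b : Fin 4, ρ g (B a) (B b) = -Λ * g (B a) (B b) := by
    intro a b
    rw [hρ, hrg]
    have hswap : ∀ e f : Fin 4, R (B e) (B a) (B b) (B f) = - R (B b) (B f) (B a) (B e) := by
      intro e f
      rw [hR3 (B e) (B a) (B b) (B f)]
      exact hR2 _ _ _ _
    calc (∑ e, ∑ f, gi e f * R (B e) (B a) (B b) (B f))
        = ∑ e, ∑ f, -(gi f e * R (B b) (B f) (B a) (B e)) := by
          refine sum_congr rfl fun e _ => sum_congr rfl fun f _ => ?_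
          rw [hswap e f, hgis e f]; ring
      _ = -(∑ e, ∑ f, gi f e * R (B b) (B f) (B a) (B e)) := by
          simp
      _ = -(∑ f, ∑ e, gi f e * R (B b) (B f) (B a) (B e)) := by
          rw [Finset.sum_comm]
      _ = -(Λ * g (B b) (B a)) := by rw [hRic b a]
      _ = -Λ * g (B a) (B b) := by rw [hg_symm (B b) (B a)]; ring
  -- symmetry of ρ γ on basis vectors
  have hsym : ∀ a b : Fin 4, ρ γ (B a) (B b) = ρ γ (B b) (B a) := by
    intro a b
    rw [hρ, hρ]
    have hRsw : ∀ e f : Fin 4, R (B e) (B b) (B a) (B f) = R (B f) (B a) (B b) (B e) := by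
      intro e f
      rw [hR3 (B e) (B b) (B a) (B f), hR1 (B a) (B f) (B e) (B b),
        hR2 (B f) (B a) (B e) (B b)]
      ring
    have h1 : (∑ c, ∑ e, ∑ d, ∑ f, gi c e * gi d f * R (B e) (B a) (B b) (B f) * γ (B c) (B d))
        = ∑ c, ∑ e, ∑ d, ∑ f, gi d f * gi c e * R (B f) (B a) (B b) (B e) * γ (B d) (B c) :=
      swap4 (fun c e d f => gi c e * gi d f * R (B e) (B a) (B b) (B f) * γ (B c) (B d))
    rw [h1]
    refine sum_congr rfl fun c _ => sum_congr rfl fun e _ =>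
      sum_congr rfl fun d _ => sum_congr rfl fun f _ => ?_
    rw [hRsw e f, hγ_symm (B d) (B c)]
    ring
  -- trace formula
  have key : ∀ (δ : V →ₗ[ℝ] V →ₗ[ℝ] ℝ) (S : V →ₗ[ℝ] V), (∀ u v : V, δ u v = g u (S v)) →
      LinearMap.trace ℝ V S = ∑ a, ∑ c, gi a c * δ (B c) (B a) := by
    intro δ S hS
    have hδG : ∀ c b : Fin 4, δ (B c) (B b)
        = ∑ a, (LinearMap.toMatrix B B S) a b * g (B c) (B a) := by
      intro c b
      rw [hS]
      conv_lhs => rw [← B.sum_repr (S (B b))]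
      simp [map_sum, map_smul, smul_eq_mul, LinearMap.toMatrix_apply, mul_comm]
      conv_lhs => rw [← B.sum_repr (S (B b))]
      rw [map_sum]; exact sum_congr rfl fun x _ => by rw [map_smul, smul_eq_mul, mul_comm]
    have hMentry : ∀ a b : Fin 4,
        (∑ c, gi a c * δ (B c) (B b)) = (LinearMap.toMatrix B B S) a b := by
      intro a b
      calc (∑ c, gi a c * δ (B c) (B b))
          = ∑ c, ∑ a', gi a c * ((LinearMap.toMatrix B B S) a' b * g (B c) (B a')) := by
            refine sum_congr rfl fun c _ => ?_
            rw [hδG c b, Finset.mul_sum]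
        _ = ∑ a', ∑ c, gi a c * ((LinearMap.toMatrix B B S) a' b * g (B c) (B a')) :=
            Finset.sum_comm
        _ = ∑ a', (∑ c, gi a c * g (B c) (B a')) * (LinearMap.toMatrix B B S) a' b := by
            refine sum_congr rfl fun a' _ => ?_
            rw [Finset.sum_mul]
            exact sum_congr rfl fun c _ => by ring
        _ = ∑ a', (if a = a' then (1:ℝ) else 0) * (LinearMap.toMatrix B B S) a' b := by
            refine sum_congr rfl fun a' _ => ?_
            rw [hL a a']
        _ = (LinearMap.toMatrix B B S) a b := by simp [ite_mul]
    rw [LinearMap.trace_eq_matrix_trace ℝ B S, Matrix.trace]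
    simp only [Matrix.diag]
    exact sum_congr rfl fun a _ => (hMentry a a).symm
  -- contraction of Ricci appearing in the trace of ρ γ
  have hcontr : ∀ e f : Fin 4,
      (∑ a, ∑ c, gi a c * R (B e) (B c) (B a) (B f)) = -Λ * g (B e) (B f) := by
    intro e f
    calc (∑ a, ∑ c, gi a c * R (B e) (B c) (B a) (B f))
        = ∑ a, ∑ c, -(gi c a * R (B e) (B c) (B f) (B a)) := by
          refine sum_congr rfl fun a _ => sum_congr rfl fun c _ => ?_
          rw [hR2 (B e) (B c) (B a) (B f), hgis a c]; ring
      _ = -(∑ a, ∑ c, gi c a * R (B e) (B c) (B f) (B a)) := by simp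
      _ = -(∑ c, ∑ a, gi c a * R (B e) (B c) (B f) (B a)) := by rw [Finset.sum_comm]
      _ = -(Λ * g (B e) (B f)) := by rw [hRic e f]
      _ = -Λ * g (B e) (B f) := by ring
  have hgig : ∀ c d : Fin 4,
      (∑ e, ∑ f, gi c e * gi d f * g (B e) (B f)) = gi c d := by
    intro c d
    calc (∑ e, ∑ f, gi c e * gi d f * g (B e) (B f))
        = ∑ e, gi c e * ∑ f, g (B e) (B f) * gi f d := by
          refine sum_congr rfl fun e _ => ?_
          rw [Finset.mul_sum]
          exact sum_congr rfl fun f _ => by rw [hgis d f]; ring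
      _ = ∑ e, gi c e * (if e = d then (1:ℝ) else 0) := by
          refine sum_congr rfl fun e _ => ?_
          rw [hRmul e d]
      _ = gi c d := by simp [mul_ite]
  -- trace of T' in terms of trace of T
  have htrT' : LinearMap.trace ℝ V T' = -Λ * LinearMap.trace ℝ V T := by
    rw [key (ρ γ) T' hT', key γ T hT]
    calc (∑ a, ∑ c, gi a c * ρ γ (B c) (B a))
        = ∑ a, ∑ c, ∑ c', ∑ e, ∑ d, ∑ f,
            gi a c * (gi c' e * gi d f * R (B e) (B c) (B a) (B f) * γ (B c') (B d)) := by
          refine sum_congr rfl fun a _ => sum_congr rfl fun c _ => ?_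
          rw [hρ]
          simp only [Finset.mul_sum]
      _ = ∑ c', ∑ e, ∑ d, ∑ f, ∑ a, ∑ c,
            gi a c * (gi c' e * gi d f * R (B e) (B c) (B a) (B f) * γ (B c') (B d)) :=
          swap24 (fun a c c' e d f =>
            gi a c * (gi c' e * gi d f * R (B e) (B c) (B a) (B f) * γ (B c') (B d)))
      _ = ∑ c', ∑ e, ∑ d, ∑ f, (gi c' e * gi d f * γ (B c') (B d)) *
            ∑ a, ∑ c, gi a c * R (B e) (B c) (B a) (B f) := by
          refine sum_congr rfl fun c' _ => sum_congr rfl fun e _ =>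
            sum_congr rfl fun d _ => sum_congr rfl fun f _ => ?_
          rw [Finset.mul_sum]
          refine sum_congr rfl fun a _ => ?_
          rw [Finset.mul_sum]
          exact sum_congr rfl fun c _ => by ring
      _ = ∑ c', ∑ e, ∑ d, ∑ f, (gi c' e * gi d f * γ (B c') (B d)) * (-Λ * g (B e) (B f)) := by
          refine sum_congr rfl fun c' _ => sum_congr rfl fun e _ =>
            sum_congr rfl fun d _ => sum_congr rfl fun f _ => ?_
          rw [hcontr e f]
      _ = ∑ c', ∑ d, ∑ e, ∑ f, (gi c' e * gi d f * γ (B c') (B d)) * (-Λ * g (B e) (B f)) := by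
          exact sum_congr rfl fun c' _ => Finset.sum_comm
      _ = ∑ c', ∑ d, (-Λ * γ (B c') (B d)) * ∑ e, ∑ f, gi c' e * gi d f * g (B e) (B f) := by
          refine sum_congr rfl fun c' _ => sum_congr rfl fun d _ => ?_
          rw [Finset.mul_sum]
          refine sum_congr rfl fun e _ => ?_
          rw [Finset.mul_sum]
          exact sum_congr rfl fun f _ => by ring
      _ = ∑ c', ∑ d, (-Λ * γ (B c') (B d)) * gi c' d := by
          refine sum_congr rfl fun c' _ => sum_congr rfl fun d _ => ?_
          rw [hgig c' d]
      _ = -Λ * ∑ a, ∑ c, gi a c * γ (B c) (B a) := by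
          rw [Finset.mul_sum]
          refine sum_congr rfl fun a _ => ?_
          rw [Finset.mul_sum]
          refine sum_congr rfl fun c _ => ?_
          rw [hγ_symm (B c) (B a)]
          ring
  -- linearity of the contraction formula
  have hρlin : ∀ a b : Fin 4,
      ρ (γ - ((1/2) * LinearMap.trace ℝ V T) • g) (B a) (B b)
        = ρ γ (B a) (B b) - ((1/2) * LinearMap.trace ℝ V T) * ρ g (B a) (B b) := by
    intro a b
    rw [hρ (γ - ((1/2) * LinearMap.trace ℝ V T) • g) a b, hρ γ a b, hρ g a b]
    rw [Finset.mul_sum, ← Finset.sum_sub_distrib]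
    refine sum_congr rfl fun c _ => ?_
    rw [Finset.mul_sum, ← Finset.sum_sub_distrib]
    refine sum_congr rfl fun e _ => ?_
    rw [Finset.mul_sum, ← Finset.sum_sub_distrib]
    refine sum_congr rfl fun d _ => ?_
    rw [Finset.mul_sum, ← Finset.sum_sub_distrib]
    refine sum_congr rfl fun f _ => ?_
    simp only [LinearMap.sub_apply, LinearMap.smul_apply, smul_eq_mul]
    ring
  constructor
  · -- symmetry for arbitrary vectors
    have expand : ∀ w z : V, ρ γ w z
        = ∑ i, ∑ j, B.repr w i * B.repr z j * ρ γ (B i) (B j) := by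
      intro w z
      conv_lhs => rw [← B.sum_repr w, ← B.sum_repr z]
      simp only [map_sum, map_smul, LinearMap.sum_apply, LinearMap.smul_apply, smul_eq_mul,
        Finset.sum_apply]
      rw [Finset.sum_comm]
      refine sum_congr rfl fun i _ => ?_
      rw [Finset.mul_sum]
      exact sum_congr rfl fun j _ => by ring
    intro u v
    rw [expand u v, expand v u, Finset.sum_comm]
    refine sum_congr rfl fun j _ => sum_congr rfl fun i _ => ?_
    rw [hsym i j]
    ring
  · -- trace reversal commutes with ρ
    refine B.ext fun a => B.ext fun b => ?_
    rw [hρlin a b]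
    simp only [LinearMap.sub_apply, LinearMap.smul_apply, smul_eq_mul]
    rw [hrg2 a b, htrT']
    ring
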